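/- If (X,Y,Z,Z̄,Q) are jointly distributed with X–QZ̄–Y a Markov chain, I(Y;Q|XZ̄)=0 and I(X;Q|YZ̄)=0, then there exists Q' with H(Q'|XZ̄)=H(Q'|YZ̄)=0, XY–Q'Z̄–Q a (conditional) Markov chain, and I(XY;Q|Z̄) ≤ H(Q'|Z̄); equality holds iff H(Q'|QZ̄)=0. -/

import Mathlib

open Finset

/-- A probability mass function on a finite sample space. -/
def IsPMF {Ω : Type*} [Fintype Ω] (p : Ω → ℝ) : Prop :=
  (∀ ω, 0 ≤ p ω) ∧ ∑ ω, p ω = 1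

/-- Probability that the random variable `X` takes the value `x`. -/
noncomputable def pr {Ω 𝒳 : Type*} [Fintype Ω] [DecidableEq 𝒳]
    (p : Ω → ℝ) (X : Ω → 𝒳) (x : 𝒳) : ℝ :=
  ∑ ω, if X ω = x then p ω else 0

/-- Shannon entropy (in bits) of the random variable `X` under `p`. -/
noncomputable def H {Ω 𝒳 : Type*} [Fintype Ω] [Fintype 𝒳] [DecidableEq 𝒳]
    (p : Ω → ℝ) (X : Ω → 𝒳) : ℝ :=
  -∑ x, pr p X x * Real.logb 2 (pr p X x)

/-- Conditional entropy `H(X|Y)`. -/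
noncomputable def condH {Ω 𝒳 𝒴 : Type*} [Fintype Ω] [Fintype 𝒳] [DecidableEq 𝒳]
    [Fintype 𝒴] [DecidableEq 𝒴] (p : Ω → ℝ) (X : Ω → 𝒳) (Y : Ω → 𝒴) : ℝ :=
  H p (fun ω => (X ω, Y ω)) - H p Y

/-- Mutual information `I(X;Y)`. -/
noncomputable def MI {Ω 𝒳 𝒴 : Type*} [Fintype Ω] [Fintype 𝒳] [DecidableEq 𝒳]
    [Fintype 𝒴] [DecidableEq 𝒴] (p : Ω → ℝ) (X : Ω → 𝒳) (Y : Ω → 𝒴) : ℝ :=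
  H p X + H p Y - H p (fun ω => (X ω, Y ω))

/-- Conditional mutual information `I(X;Y|Z)`. -/
noncomputable def condMI {Ω 𝒳 𝒴 𝒵 : Type*} [Fintype Ω] [Fintype 𝒳] [DecidableEq 𝒳]
    [Fintype 𝒴] [DecidableEq 𝒴] [Fintype 𝒵] [DecidableEq 𝒵]
    (p : Ω → ℝ) (X : Ω → 𝒳) (Y : Ω → 𝒴) (Z : Ω → 𝒵) : ℝ :=
  condH p X Z - condH p X (fun ω => (Y ω, Z ω))


section Generic
variable {Ω : Type*} [Fintype Ω] {p : Ω → ℝ}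

lemma pr_nonneg {𝒳 : Type*} [DecidableEq 𝒳] (hp : ∀ ω, 0 ≤ p ω)
    (X : Ω → 𝒳) (x : 𝒳) : 0 ≤ pr p X x := by
  refine Finset.sum_nonneg fun ω _ => ?_
  split
  · exact hp ω
  · exact le_refl 0

lemma pr_congr {𝒮 𝒯 : Type*} [DecidableEq 𝒮] [DecidableEq 𝒯]
    {S : Ω → 𝒮} {T : Ω → 𝒯} {s : 𝒮} {t : 𝒯}
    (h : ∀ ω, S ω = s ↔ T ω = t) : pr p S s = pr p T t := by
  refine Finset.sum_congr rfl fun ω _ => ?_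
  rw [if_congr (h ω) rfl rfl]

lemma pr_eq_zero_of {𝒮 : Type*} [DecidableEq 𝒮] {S : Ω → 𝒮} {s : 𝒮}
    (h : ∀ ω, S ω ≠ s) : pr p S s = 0 := by
  refine Finset.sum_eq_zero fun ω _ => ?_
  simp [h ω]

lemma pr_comp {𝒯 𝒮 : Type*} [Fintype 𝒯] [DecidableEq 𝒯] [DecidableEq 𝒮]
    (p : Ω → ℝ) (T : Ω → 𝒯) (φ : 𝒯 → 𝒮) (s : 𝒮) :
    pr p (fun ω => φ (T ω)) s = ∑ t, if φ t = s then pr p T t else 0 := by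
  unfold pr
  have key : ∀ ω, (if φ (T ω) = s then p ω else 0)
      = ∑ t, if φ t = s then (if T ω = t then p ω else 0) else 0 := by
    intro ω
    rw [Finset.sum_eq_single (T ω)]
    · simp
    · intro t _ ht
      simp [Ne.symm ht]
    · simp
  simp_rw [key]
  rw [Finset.sum_comm]
  refine Finset.sum_congr rfl fun t _ => ?_
  split
  · rfl
  · exact Finset.sum_const_zero

lemma sum_pr {𝒯 : Type*} [Fintype 𝒯] [DecidableEq 𝒯] (hp : IsPMF p) (T : Ω → 𝒯) :
    ∑ t, pr p T t = 1 := by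
  unfold pr
  rw [Finset.sum_comm]
  calc ∑ ω, ∑ t, (if T ω = t then p ω else 0) = ∑ ω, p ω := by
        refine Finset.sum_congr rfl fun ω _ => ?_
        simp
    _ = 1 := hp.2

lemma pr_le_pr_comp {𝒯 𝒮 : Type*} [Fintype 𝒯] [DecidableEq 𝒯] [DecidableEq 𝒮]
    (hp : ∀ ω, 0 ≤ p ω) (T : Ω → 𝒯) (φ : 𝒯 → 𝒮) (t : 𝒯) :
    pr p T t ≤ pr p (fun ω => φ (T ω)) (φ t) := by
  rw [pr_comp p T φ (φ t)]
  have := Finset.single_le_sum (f := fun t' => if φ t' = φ t then pr p T t' else 0)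
    (fun t' _ => by split
                    · exact pr_nonneg hp T t'
                    · exact le_refl 0) (Finset.mem_univ t)
  simpa using this

lemma le_pr_self {𝒯 : Type*} [DecidableEq 𝒯] (hp : ∀ ω, 0 ≤ p ω) (T : Ω → 𝒯) (ω : Ω) :
    p ω ≤ pr p T (T ω) := by
  have := Finset.single_le_sum (f := fun ω' => if T ω' = T ω then p ω' else 0)
    (fun ω' _ => by split
                    · exact hp ω'
                    · exact le_refl 0) (Finset.mem_univ ω)
  simpa [pr] using this

end Generic


section Generic2
variable {Ω : Type*} [Fintype Ω] {p : Ω → ℝ}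

lemma H_comp_eq {𝒯 𝒮 : Type*} [Fintype 𝒯] [DecidableEq 𝒯] [Fintype 𝒮] [DecidableEq 𝒮]
    (p : Ω → ℝ) (T : Ω → 𝒯) (φ : 𝒯 → 𝒮) :
    H p (fun ω => φ (T ω))
      = -∑ t, pr p T t * Real.logb 2 (pr p (fun ω => φ (T ω)) (φ t)) := by
  unfold H
  congr 1
  calc ∑ s, pr p (fun ω => φ (T ω)) s * Real.logb 2 (pr p (fun ω => φ (T ω)) s)
      = ∑ s, ∑ t, (if φ t = s then pr p T t * Real.logb 2 (pr p (fun ω => φ (T ω)) s) else 0) := by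
        refine Finset.sum_congr rfl fun s _ => ?_
        rw [pr_comp p T φ s, Finset.sum_mul]
        refine Finset.sum_congr rfl fun t _ => ?_
        split <;> simp
    _ = ∑ t, ∑ s, (if φ t = s then pr p T t * Real.logb 2 (pr p (fun ω => φ (T ω)) s) else 0) :=
        Finset.sum_comm
    _ = ∑ t, pr p T t * Real.logb 2 (pr p (fun ω => φ (T ω)) (φ t)) := by
        refine Finset.sum_congr rfl fun t _ => ?_
        simp

lemma pr_comp_inj {𝒯 𝒮 : Type*} [Fintype 𝒯] [DecidableEq 𝒯] [DecidableEq 𝒮]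
    (p : Ω → ℝ) (T : Ω → 𝒯) {φ : 𝒯 → 𝒮} (hφ : Function.Injective φ) (t : 𝒯) :
    pr p (fun ω => φ (T ω)) (φ t) = pr p T t := by
  unfold pr
  refine Finset.sum_congr rfl fun ω _ => ?_
  rw [if_congr hφ.eq_iff rfl rfl]

lemma H_comp_inj {𝒯 𝒮 : Type*} [Fintype 𝒯] [DecidableEq 𝒯] [Fintype 𝒮] [DecidableEq 𝒮]
    (p : Ω → ℝ) (T : Ω → 𝒯) {φ : 𝒯 → 𝒮} (hφ : Function.Injective φ) :
    H p (fun ω => φ (T ω)) = H p T := by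
  rw [H_comp_eq]
  unfold H
  congr 1
  refine Finset.sum_congr rfl fun t _ => ?_
  rw [pr_comp_inj p T hφ t]

lemma H_pair_det {𝒱 𝒲 : Type*} [Fintype 𝒱] [DecidableEq 𝒱] [Fintype 𝒲] [DecidableEq 𝒲]
    {V : Ω → 𝒱} {W : Ω → 𝒲} {f : 𝒲 → 𝒱}
    (hdet : ∀ ω, p ω ≠ 0 → V ω = f (W ω)) :
    H p (fun ω => (V ω, W ω)) = H p W := by
  have key : ∀ v w, pr p (fun ω => (V ω, W ω)) (v, w) = if v = f w then pr p W w else 0 := by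
    intro v w
    split
    · next hv =>
      refine Finset.sum_congr rfl fun ω _ => ?_
      by_cases hω : p ω = 0
      · split <;> split <;> simp [hω]
      · have hV := hdet ω hω
        by_cases hw : W ω = w
        · simp [Prod.ext_iff, hw, hV, hv]
        · simp [Prod.ext_iff, hw]
    · next hv =>
      refine Finset.sum_eq_zero fun ω _ => ?_
      by_cases hω : p ω = 0
      · split <;> simp [hω]
      · have hV := hdet ω hω
        rw [if_neg]
        rintro h
        simp only [Prod.mk.injEq] at h
        exact hv (by rw [← h.1, hV, h.2])
  unfold H
  congr 1
  rw [Fintype.sum_prod_type, Finset.sum_comm]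
  refine Finset.sum_congr rfl fun w _ => ?_
  rw [Finset.sum_eq_single (f w)]
  · rw [key (f w) w, if_pos rfl]
  · intro v _ hv
    rw [key v w, if_neg hv]
    simp
  · simp



lemma condH_det {𝒱 𝒲 : Type*} [Fintype 𝒱] [DecidableEq 𝒱] [Fintype 𝒲] [DecidableEq 𝒲]
    {V : Ω → 𝒱} {W : Ω → 𝒲} {f : 𝒲 → 𝒱}
    (hdet : ∀ ω, p ω ≠ 0 → V ω = f (W ω)) : condH p V W = 0 := by
  unfold condH
  rw [H_pair_det hdet]
  ring

lemma condH_nonneg {𝒱 𝒲 : Type*} [Fintype 𝒱] [DecidableEq 𝒱] [Fintype 𝒲] [DecidableEq 𝒲]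
    (hp : IsPMF p) (V : Ω → 𝒱) (W : Ω → 𝒲) : 0 ≤ condH p V W := by
  unfold condH
  set M : Ω → 𝒱 × 𝒲 := fun ω => (V ω, W ω) with hM
  have hW : H p W = -∑ t, pr p M t * Real.logb 2 (pr p W t.2) := H_comp_eq p M (fun t => t.2)
  have hMH : H p M = -∑ t, pr p M t * Real.logb 2 (pr p M t) := rfl
  rw [hW, hMH]
  have key : ∀ t : 𝒱 × 𝒲, pr p M t * Real.logb 2 (pr p M t)
      ≤ pr p M t * Real.logb 2 (pr p W t.2) := by
    intro t
    by_cases h0 : pr p M t = 0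
    · rw [h0]; simp
    · have hpos : 0 < pr p M t := lt_of_le_of_ne (pr_nonneg hp.1 M t) (Ne.symm h0)
      have hle : pr p M t ≤ pr p W t.2 := pr_le_pr_comp hp.1 M (fun t => t.2) t
      exact mul_le_mul_of_nonneg_left (Real.logb_le_logb_of_le one_lt_two hpos hle) hpos.le
  have hsum := Finset.sum_le_sum (fun t (_ : t ∈ Finset.univ) => key t)
  linarith [hsum]

end Generic2

section CMI
variable {Ω α β γ : Type*} [Fintype Ω] [Fintype α] [DecidableEq α]
  [Fintype β] [DecidableEq β] [Fintype γ] [DecidableEq γ]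
  {p : Ω → ℝ} (A : Ω → α) (B : Ω → β) (C : Ω → γ)

lemma sum_pr_pair_left (c : γ) :
    ∑ a, pr p (fun ω => (A ω, C ω)) (a, c) = pr p C c := by
  unfold pr
  rw [Finset.sum_comm]
  refine Finset.sum_congr rfl fun ω _ => ?_
  by_cases hc : C ω = c
  · simp [Prod.ext_iff, hc]
  · simp [Prod.ext_iff, hc]

lemma condMI_eq_sum (p : Ω → ℝ) :
    condMI p A B C = ∑ m : α × β × γ, pr p (fun ω => (A ω, (B ω, C ω))) m *
      (Real.logb 2 (pr p (fun ω => (A ω, (B ω, C ω))) m)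
        + Real.logb 2 (pr p C m.2.2)
        - Real.logb 2 (pr p (fun ω => (A ω, C ω)) (m.1, m.2.2))
        - Real.logb 2 (pr p (fun ω => (B ω, C ω)) m.2)) := by
  set M : Ω → α × β × γ := fun ω => (A ω, (B ω, C ω)) with hM
  have hAC : H p (fun ω => (A ω, C ω))
      = -∑ m, pr p M m * Real.logb 2 (pr p (fun ω => (A ω, C ω)) (m.1, m.2.2)) :=
    H_comp_eq p M (fun m => (m.1, m.2.2))
  have hC : H p C = -∑ m, pr p M m * Real.logb 2 (pr p C m.2.2) :=
    H_comp_eq p M (fun m => m.2.2)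
  have hBC : H p (fun ω => (B ω, C ω))
      = -∑ m, pr p M m * Real.logb 2 (pr p (fun ω => (B ω, C ω)) m.2) :=
    H_comp_eq p M (fun m => m.2)
  have hABC : H p M = -∑ m, pr p M m * Real.logb 2 (pr p M m) := rfl
  unfold condMI condH
  rw [show H p (fun ω => (A ω, (fun ω => (B ω, C ω)) ω)) = H p M from rfl]
  rw [show H p (fun ω => (A ω, C ω)) = -∑ m, pr p M m * Real.logb 2 (pr p (fun ω => (A ω, C ω)) (m.1, m.2.2)) from hAC]
  rw [show H p (fun ω => (B ω, C ω)) = -∑ m, pr p M m * Real.logb 2 (pr p (fun ω => (B ω, C ω)) m.2) from hBC]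
  rw [hC, hABC]
  rw [show (∑ m : α × β × γ, pr p M m *
      (Real.logb 2 (pr p M m) + Real.logb 2 (pr p C m.2.2)
        - Real.logb 2 (pr p (fun ω => (A ω, C ω)) (m.1, m.2.2))
        - Real.logb 2 (pr p (fun ω => (B ω, C ω)) m.2)))
      = (∑ m, pr p M m * Real.logb 2 (pr p M m)) + (∑ m, pr p M m * Real.logb 2 (pr p C m.2.2))
        - (∑ m, pr p M m * Real.logb 2 (pr p (fun ω => (A ω, C ω)) (m.1, m.2.2)))
        - (∑ m, pr p M m * Real.logb 2 (pr p (fun ω => (B ω, C ω)) m.2)) from by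
    rw [← Finset.sum_add_distrib, ← Finset.sum_sub_distrib, ← Finset.sum_sub_distrib]
    exact Finset.sum_congr rfl fun m _ => by ring]
  ring

lemma condMI_zero_of_indep (hp : IsPMF p)
    (hfact : ∀ a b c, pr p (fun ω => (A ω, (B ω, C ω))) (a,(b,c)) * pr p C c
      = pr p (fun ω => (A ω, C ω)) (a,c) * pr p (fun ω => (B ω, C ω)) (b,c)) :
    condMI p A B C = 0 := by
  rw [condMI_eq_sum A B C p]
  refine Finset.sum_eq_zero fun m _ => ?_
  obtain ⟨a, b, c⟩ := m
  set M : Ω → α × β × γ := fun ω => (A ω, (B ω, C ω)) with hM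
  by_cases hPM : pr p M (a,(b,c)) = 0
  · simp [hM] at hPM ⊢
    left; exact hPM
  · have hPMpos : 0 < pr p M (a,(b,c)) := lt_of_le_of_ne (pr_nonneg hp.1 M _) (Ne.symm hPM)
    have hPC : 0 < pr p C c :=
      lt_of_lt_of_le hPMpos (pr_le_pr_comp hp.1 M (fun m => m.2.2) (a,(b,c)))
    have hPAC : 0 < pr p (fun ω => (A ω, C ω)) (a,c) :=
      lt_of_lt_of_le hPMpos (pr_le_pr_comp hp.1 M (fun m => (m.1, m.2.2)) (a,(b,c)))
    have hPBC : 0 < pr p (fun ω => (B ω, C ω)) (b,c) := by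
      have h0 : 0 < pr p (fun ω => (A ω, C ω)) (a,c) * pr p (fun ω => (B ω, C ω)) (b,c) := by
        rw [← hfact a b c]; exact mul_pos hPMpos hPC
      nlinarith [pr_nonneg hp.1 (fun ω => (B ω, C ω)) (b,c)]
    have hlog := congrArg (Real.logb 2) (hfact a b c)
    rw [Real.logb_mul hPMpos.ne' hPC.ne', Real.logb_mul hPAC.ne' hPBC.ne'] at hlog
    have : Real.logb 2 (pr p M (a,(b,c))) + Real.logb 2 (pr p C c)
        - Real.logb 2 (pr p (fun ω => (A ω, C ω)) (a,c))
        - Real.logb 2 (pr p (fun ω => (B ω, C ω)) (b,c)) = 0 := by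
      simp only [hM] at hlog ⊢
      linarith
    simp only [hM] at this ⊢
    rw [this, mul_zero]

lemma indep_of_condMI_zero (hp : IsPMF p) (hMI : condMI p A B C = 0) :
    ∀ a b c, pr p (fun ω => (A ω, (B ω, C ω))) (a,(b,c)) * pr p C c
      = pr p (fun ω => (A ω, C ω)) (a,c) * pr p (fun ω => (B ω, C ω)) (b,c) := by
  set M : Ω → α × β × γ := fun ω => (A ω, (B ω, C ω)) with hM
  set PM : α × β × γ → ℝ := fun m => pr p M m with hPM
  set PAC : α × γ → ℝ := fun v => pr p (fun ω => (A ω, C ω)) v with hPAC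
  set PBC : β × γ → ℝ := fun v => pr p (fun ω => (B ω, C ω)) v with hPBC
  set PC : γ → ℝ := fun c => pr p C c with hPC
  -- nonnegativity facts
  have hPMn : ∀ m, 0 ≤ PM m := fun m => pr_nonneg hp.1 M m
  have hPACn : ∀ v, 0 ≤ PAC v := fun v => pr_nonneg hp.1 _ v
  have hPBCn : ∀ v, 0 ≤ PBC v := fun v => pr_nonneg hp.1 _ v
  have hPCn : ∀ c, 0 ≤ PC c := fun c => pr_nonneg hp.1 _ c
  have hmargC : ∀ m : α × β × γ, PM m ≤ PC m.2.2 := fun m =>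
    pr_le_pr_comp hp.1 M (fun m => m.2.2) m
  have hmargAC : ∀ m : α × β × γ, PM m ≤ PAC (m.1, m.2.2) := fun m =>
    pr_le_pr_comp hp.1 M (fun m => (m.1, m.2.2)) m
  have hmargBC : ∀ m : α × β × γ, PM m ≤ PBC m.2 := fun m =>
    pr_le_pr_comp hp.1 M (fun m => m.2) m
  have hACC : ∀ v : α × γ, PAC v ≤ PC v.2 := fun v =>
    pr_le_pr_comp hp.1 (fun ω => (A ω, C ω)) (fun v => v.2) v
  -- the u, g, d functions
  set u : α × β × γ → ℝ := fun m => PM m * (Real.log (PM m) + Real.log (PC m.2.2)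
    - Real.log (PAC (m.1, m.2.2)) - Real.log (PBC m.2)) with hu
  set g : α × β × γ → ℝ := fun m => PAC (m.1, m.2.2) * PBC m.2 / PC m.2.2 with hg
  set d : α × β × γ → ℝ := fun m => g m - PM m + u m with hd
  have husum : ∑ m, u m = 0 := by
    have := condMI_eq_sum A B C p
    rw [hMI] at this
    have h2 : (0:ℝ) = ∑ m : α × β × γ, u m / Real.log 2 := by
      rw [this]
      refine Finset.sum_congr rfl fun m _ => ?_
      simp only [hu, Real.logb, hM, hPM, hPAC, hPBC, hPC]
      ring
    have hlog2 : Real.log 2 ≠ 0 := by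
      have : (1:ℝ) < 2 := one_lt_two
      exact (Real.log_pos this).ne'
    rw [← Finset.sum_div] at h2
    field_simp at h2
    linarith [h2]
  have hgsum : ∑ m : α × β × γ, g m = 1 := by
    have h1 : ∑ m : α × β × γ, g m = ∑ c, ∑ a, ∑ b, PAC (a,c) * PBC (b,c) / PC c := by
      rw [Fintype.sum_prod_type]
      have e0 : ∀ a, ∑ m : β × γ, g (a, m) = ∑ b, ∑ c, PAC (a,c) * PBC (b,c) / PC c := by
        intro a
        rw [Fintype.sum_prod_type]
      simp_rw [e0]
      have e1 : ∀ a, ∑ b, ∑ c, PAC (a,c) * PBC (b,c) / PC c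
          = ∑ c, ∑ b, PAC (a,c) * PBC (b,c) / PC c := fun a => Finset.sum_comm
      simp_rw [e1]
      exact Finset.sum_comm
    rw [h1]
    have h2 : ∀ c, ∑ a, ∑ b, PAC (a,c) * PBC (b,c) / PC c = PC c := by
      intro c
      by_cases hc : PC c = 0
      · have hACz : ∀ a, PAC (a,c) = 0 := fun a =>
          le_antisymm (le_trans (hACC (a,c)) (le_of_eq hc)) (hPACn _)
        simp [hACz, hc]
      · have e2 : ∀ a, ∑ b, PAC (a,c) * PBC (b,c) / PC c
            = PAC (a,c) * (∑ b, PBC (b,c)) / PC c := by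
          intro a
          rw [← Finset.sum_div, ← Finset.mul_sum]
        simp_rw [e2]
        rw [← Finset.sum_div, ← Finset.sum_mul]
        have hma : ∑ a, PAC (a,c) = PC c := sum_pr_pair_left A C c
        have hmb : ∑ b, PBC (b,c) = PC c := sum_pr_pair_left B C c
        rw [hma, hmb, mul_div_assoc, div_self hc, mul_one]
    simp_rw [h2]
    exact sum_pr hp C
  have hdnn : ∀ m, 0 ≤ d m := by
    intro m
    by_cases hPMm : PM m = 0
    · simp only [hd, hu, hPMm]
      have : 0 ≤ g m := div_nonneg (mul_nonneg (hPACn _) (hPBCn _)) (hPCn _)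
      linarith
    · have hPMpos : 0 < PM m := lt_of_le_of_ne (hPMn m) (Ne.symm hPMm)
      have hPCpos : 0 < PC m.2.2 := lt_of_lt_of_le hPMpos (hmargC m)
      have hPACpos : 0 < PAC (m.1, m.2.2) := lt_of_lt_of_le hPMpos (hmargAC m)
      have hPBCpos : 0 < PBC m.2 := lt_of_lt_of_le hPMpos (hmargBC m)
      have hgpos : 0 < g m := div_pos (mul_pos hPACpos hPBCpos) hPCpos
      have hukey : u m = -(PM m * Real.log (g m / PM m)) := by
        rw [Real.log_div hgpos.ne' hPMpos.ne', hg]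
        rw [Real.log_div (mul_pos hPACpos hPBCpos).ne' hPCpos.ne',
          Real.log_mul hPACpos.ne' hPBCpos.ne']
        simp only [hu]
        ring
      have hlogle : Real.log (g m / PM m) ≤ g m / PM m - 1 :=
        Real.log_le_sub_one_of_pos (div_pos hgpos hPMpos)
      have : PM m * Real.log (g m / PM m) ≤ g m - PM m := by
        have := mul_le_mul_of_nonneg_left hlogle hPMpos.le
        have hPMdiv : PM m * (g m / PM m - 1) = g m - PM m := by
          field_simp
        linarith [hPMdiv ▸ this]
      simp only [hd, hukey]
      linarith
  have hdsum : ∑ m : α × β × γ, d m = 0 := by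
    have : ∑ m : α × β × γ, d m = (∑ m : α × β × γ, g m) - (∑ m : α × β × γ, PM m) + ∑ m : α × β × γ, u m := by
      simp only [hd]
      rw [Finset.sum_add_distrib, Finset.sum_sub_distrib]
    have hPMsum : ∑ m : α × β × γ, PM m = 1 := sum_pr hp M
    rw [this, hgsum, hPMsum, husum]; ring
  have hdzero : ∀ m : α × β × γ, d m = 0 := by
    intro m
    have := (Finset.sum_eq_zero_iff_of_nonneg (fun m _ => hdnn m)).mp hdsum
    exact this m (Finset.mem_univ m)
  intro a b c
  have hm := hdzero (a,(b,c))
  by_cases hPMm : PM (a,(b,c)) = 0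
  · by_cases hPCc : PC c = 0
    · have hACz : PAC (a,c) = 0 :=
        le_antisymm (le_trans (hACC (a,c)) (le_of_eq hPCc)) (hPACn _)
      show PM (a,(b,c)) * PC c = PAC (a,c) * PBC (b,c)
      rw [hPMm, hACz]; ring
    · have hgz : g (a,(b,c)) = 0 := by
        simp only [hd, hu, hPMm] at hm
        linarith [hm]
      have : PAC (a,c) * PBC (b,c) = 0 := by
        have h' := hgz
        simp only [hg] at h'
        rcases div_eq_zero_iff.mp h' with h''|h''
        · exact h''
        · exact absurd h'' hPCc
      show PM (a,(b,c)) * PC c = PAC (a,c) * PBC (b,c)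
      rw [hPMm, this]; ring
  · have hPMpos : 0 < PM (a,(b,c)) := lt_of_le_of_ne (hPMn _) (Ne.symm hPMm)
    have hPCpos : 0 < PC c := lt_of_lt_of_le hPMpos (hmargC (a,(b,c)))
    have hPACpos : 0 < PAC (a,c) := lt_of_lt_of_le hPMpos (hmargAC (a,(b,c)))
    have hPBCpos : 0 < PBC (b,c) := lt_of_lt_of_le hPMpos (hmargBC (a,(b,c)))
    have hgpos : 0 < g (a,(b,c)) := div_pos (mul_pos hPACpos hPBCpos) hPCpos
    have hukey : u (a,(b,c)) = -(PM (a,(b,c)) * Real.log (g (a,(b,c)) / PM (a,(b,c)))) := by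
      rw [Real.log_div hgpos.ne' hPMpos.ne', hg]
      rw [Real.log_div (mul_pos hPACpos hPBCpos).ne' hPCpos.ne',
        Real.log_mul hPACpos.ne' hPBCpos.ne']
      simp only [hu]
      ring
    have hgm : g (a,(b,c)) = PM (a,(b,c)) := by
      by_contra hne
      have hrat : g (a,(b,c)) / PM (a,(b,c)) ≠ 1 := by
        intro h1
        exact hne ((div_eq_one_iff_eq hPMpos.ne').mp h1)
      have := Real.log_lt_sub_one_of_pos (div_pos hgpos hPMpos) hrat
      have hmul := mul_lt_mul_of_pos_left this hPMpos
      have hPMdiv : PM (a,(b,c)) * (g (a,(b,c)) / PM (a,(b,c)) - 1) = g (a,(b,c)) - PM (a,(b,c)) := by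
        field_simp
      rw [hPMdiv] at hmul
      simp only [hd] at hm
      rw [hukey] at hm
      linarith
    show PM (a,(b,c)) * PC c = PAC (a,c) * PBC (b,c)
    have h' : PAC (a,c) * PBC (b,c) / PC c = PM (a,(b,c)) := hgm
    rw [div_eq_iff hPCpos.ne'] at h'
    linarith [h']
end CMI



section Construction
variable {Ω 𝒳 𝒴 𝒵' : Type*} [Fintype Ω] [Fintype 𝒳] [DecidableEq 𝒳]
  [Fintype 𝒴] [DecidableEq 𝒴] [Fintype 𝒵'] [DecidableEq 𝒵']

/-- the connectedness relation (given z) on 𝒳 used to build the common part -/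
def dmRel (p : Ω → ℝ) (X : Ω → 𝒳) (Y : Ω → 𝒴) (Zb : Ω → 𝒵') (z : 𝒵') (x x' : 𝒳) : Prop :=
  ∃ y, 0 < pr p (fun ω => (X ω, Y ω, Zb ω)) (x, y, z)
    ∧ 0 < pr p (fun ω => (X ω, Y ω, Zb ω)) (x', y, z)

/-- canonical representative of the connected component of x (given z) -/
noncomputable def dmRep (p : Ω → ℝ) (X : Ω → 𝒳) (Y : Ω → 𝒴) (Zb : Ω → 𝒵') (x : 𝒳) (z : 𝒵') : 𝒳 :=
  (Quotient.mk (Relation.EqvGen.setoid (dmRel p X Y Zb z)) x).out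

lemma dmRep_rel (p : Ω → ℝ) (X : Ω → 𝒳) (Y : Ω → 𝒴) (Zb : Ω → 𝒵') (x : 𝒳) (z : 𝒵') :
    Relation.EqvGen (dmRel p X Y Zb z) (dmRep p X Y Zb x z) x :=
  @Quotient.exact _ (Relation.EqvGen.setoid (dmRel p X Y Zb z)) _ _ (Quotient.out_eq _)

lemma dmRep_congr (p : Ω → ℝ) (X : Ω → 𝒳) (Y : Ω → 𝒴) (Zb : Ω → 𝒵') {x x' : 𝒳} {z : 𝒵'}
    (h : Relation.EqvGen (dmRel p X Y Zb z) x x') :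
    dmRep p X Y Zb x z = dmRep p X Y Zb x' z := by
  unfold dmRep
  rw [Quotient.sound h]

end Construction

/-- conditional (given Zbar) version of the double Markov lemma:
if X-QZbar-Y, I(Y;Q|XZbar)=0 and I(X;Q|YZbar)=0, then there is a conditional common
random variable Q' (a deterministic function of (X,Zbar) and of (Y,Zbar), hence
representable with alphabet 𝒳 × 𝒵') with XY-Q'Zbar-Q and I(XY;Q|Zbar) ≤ H(Q'|Zbar),
with equality iff H(Q'|QZbar)=0. -/
theorem conditional_double_markov {Ω 𝒳 𝒴 𝒵' 𝒬 : Type*} [Fintype Ω]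
    [Fintype 𝒳] [DecidableEq 𝒳] [Fintype 𝒴] [DecidableEq 𝒴]
    [Fintype 𝒵'] [DecidableEq 𝒵'] [Fintype 𝒬] [DecidableEq 𝒬]
    (p : Ω → ℝ) (X : Ω → 𝒳) (Y : Ω → 𝒴) (Zb : Ω → 𝒵') (Q : Ω → 𝒬)
    (hp : IsPMF p)
    (hMC : condMI p X Y (fun ω => (Q ω, Zb ω)) = 0)
    (h1 : condMI p Y Q (fun ω => (X ω, Zb ω)) = 0)
    (h2 : condMI p X Q (fun ω => (Y ω, Zb ω)) = 0) :
    ∃ Q' : Ω → 𝒳 × 𝒵',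
      condH p Q' (fun ω => (X ω, Zb ω)) = 0 ∧
      condH p Q' (fun ω => (Y ω, Zb ω)) = 0 ∧
      condMI p (fun ω => (X ω, Y ω)) Q (fun ω => (Q' ω, Zb ω)) = 0 ∧
      condMI p (fun ω => (X ω, Y ω)) Q Zb ≤ condH p Q' Zb ∧
      (condMI p (fun ω => (X ω, Y ω)) Q Zb = condH p Q' Zb ↔
        condH p Q' (fun ω => (Q ω, Zb ω)) = 0) := by
  classical
  have hpn := hp.1
  -- canonical marginals
  set P4 : 𝒳 → 𝒴 → 𝒬 → 𝒵' → ℝ :=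
    fun x y q z => pr p (fun ω => (X ω, Y ω, Q ω, Zb ω)) (x,y,q,z) with hP4
  set P3 : 𝒳 → 𝒴 → 𝒵' → ℝ :=
    fun x y z => pr p (fun ω => (X ω, Y ω, Zb ω)) (x,y,z) with hP3
  set P2 : 𝒳 → 𝒵' → ℝ := fun x z => pr p (fun ω => (X ω, Zb ω)) (x,z) with hP2
  set PYZ : 𝒴 → 𝒵' → ℝ := fun y z => pr p (fun ω => (Y ω, Zb ω)) (y,z) with hPYZ
  set PQX : 𝒬 → 𝒳 → 𝒵' → ℝ :=
    fun q x z => pr p (fun ω => (Q ω, X ω, Zb ω)) (q,x,z) with hPQX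
  set PQY : 𝒬 → 𝒴 → 𝒵' → ℝ :=
    fun q y z => pr p (fun ω => (Q ω, Y ω, Zb ω)) (q,y,z) with hPQY
  -- conversions of tuple shapes
  have cnv1 : ∀ x y q z, pr p (fun ω => (Y ω, (Q ω, (X ω, Zb ω)))) (y,(q,(x,z))) = P4 x y q z := by
    intro x y q z
    rw [hP4]
    apply pr_congr
    intro ω
    simp only [Prod.mk.injEq]
    tauto
  have cnv2 : ∀ x y z, pr p (fun ω => (Y ω, (X ω, Zb ω))) (y,(x,z)) = P3 x y z := by
    intro x y z
    rw [hP3]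
    apply pr_congr
    intro ω
    simp only [Prod.mk.injEq]
    tauto
  have cnv4 : ∀ x y q z, pr p (fun ω => (X ω, (Q ω, (Y ω, Zb ω)))) (x,(q,(y,z))) = P4 x y q z := by
    intro x y q z
    rw [hP4]
    apply pr_congr
    intro ω
    simp only [Prod.mk.injEq]
    tauto
  -- factorizations from the double Markov hypotheses
  have F1 : ∀ x y q z, P4 x y q z * P2 x z = P3 x y z * PQX q x z := by
    intro x y q z
    have h := indep_of_condMI_zero Y Q (fun ω => (X ω, Zb ω)) hp h1 y q (x,z)
    rw [cnv1 x y q z, cnv2 x y z] at h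
    exact h
  have F2 : ∀ x y q z, P4 x y q z * PYZ y z = P3 x y z * PQY q y z := by
    intro x y q z
    have h := indep_of_condMI_zero X Q (fun ω => (Y ω, Zb ω)) hp h2 x q (y,z)
    rw [cnv4 x y q z] at h
    exact h
  -- marginal monotonicity
  have m1 : ∀ x y z, P3 x y z ≤ P2 x z := fun x y z =>
    pr_le_pr_comp hpn (fun ω => (X ω, Y ω, Zb ω)) (fun t => (t.1, t.2.2)) (x,(y,z))
  have m2 : ∀ x y z, P3 x y z ≤ PYZ y z := fun x y z =>
    pr_le_pr_comp hpn (fun ω => (X ω, Y ω, Zb ω)) (fun t => t.2) (x,(y,z))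
  have m3 : ∀ q x z, PQX q x z ≤ P2 x z := fun q x z =>
    pr_le_pr_comp hpn (fun ω => (Q ω, X ω, Zb ω)) (fun t => t.2) (q,(x,z))
  have m4 : ∀ x y q z, P4 x y q z ≤ P2 x z := fun x y q z =>
    pr_le_pr_comp hpn (fun ω => (X ω, Y ω, Q ω, Zb ω)) (fun t => (t.1, t.2.2.2)) (x,(y,(q,z)))
  -- nonnegativity
  have n4 : ∀ x y q z, 0 ≤ P4 x y q z := fun x y q z => pr_nonneg hpn _ _
  have n3 : ∀ x y z, 0 ≤ P3 x y z := fun x y z => pr_nonneg hpn _ _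
  have n2 : ∀ x z, 0 ≤ P2 x z := fun x z => pr_nonneg hpn _ _
  have nqx : ∀ q x z, 0 ≤ PQX q x z := fun q x z => pr_nonneg hpn _ _
  -- the K2 induction: conditionals constant on components
  have K2 : ∀ z x x', Relation.EqvGen (dmRel p X Y Zb z) x x' →
      ∀ q, PQX q x z * P2 x' z = PQX q x' z * P2 x z := by
    intro z x x' h
    have main : x = x' ∨ (0 < P2 x z ∧ 0 < P2 x' z ∧
        ∀ q, PQX q x z * P2 x' z = PQX q x' z * P2 x z) := by
      induction h with
      | rel a b hab =>
        obtain ⟨y, ha, hb⟩ := hab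
        replace ha : 0 < P3 a y z := by rw [hP3]; exact ha
        replace hb : 0 < P3 b y z := by rw [hP3]; exact hb
        right
        have hP2a : 0 < P2 a z := lt_of_lt_of_le ha (m1 a y z)
        have hP2b : 0 < P2 b z := lt_of_lt_of_le hb (m1 b y z)
        have hPYZp : 0 < PYZ y z := lt_of_lt_of_le ha (m2 a y z)
        refine ⟨hP2a, hP2b, fun q => ?_⟩
        have Wa : PQX q a z * PYZ y z = PQY q y z * P2 a z := by
          have f1 := F1 a y q z
          have f2 := F2 a y q z
          have h3 : P3 a y z * (PQX q a z * PYZ y z) = P3 a y z * (PQY q y z * P2 a z) := by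
            linear_combination P2 a z * f2 - PYZ y z * f1
          exact mul_left_cancel₀ ha.ne' h3
        have Wb : PQX q b z * PYZ y z = PQY q y z * P2 b z := by
          have f1 := F1 b y q z
          have f2 := F2 b y q z
          have h3 : P3 b y z * (PQX q b z * PYZ y z) = P3 b y z * (PQY q y z * P2 b z) := by
            linear_combination P2 b z * f2 - PYZ y z * f1
          exact mul_left_cancel₀ hb.ne' h3
        have hfin : (PQX q a z * P2 b z) * PYZ y z = (PQX q b z * P2 a z) * PYZ y z := by
          linear_combination P2 b z * Wa - P2 a z * Wb
        exact mul_right_cancel₀ hPYZp.ne' hfin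
      | refl a => left; rfl
      | symm a b _ ih =>
        rcases ih with rfl | ⟨ha, hb, hab⟩
        · left; rfl
        · right; exact ⟨hb, ha, fun q => (hab q).symm⟩
      | trans a b c _ _ ih1 ih2 =>
        rcases ih1 with rfl | ⟨ha, hb, hab⟩
        · exact ih2
        rcases ih2 with rfl | ⟨hb', hc, hbc⟩
        · right; exact ⟨ha, hb, hab⟩
        right
        refine ⟨ha, hc, fun q => ?_⟩
        have hfin : (PQX q a z * P2 c z) * P2 b z = (PQX q c z * P2 a z) * P2 b z := by
          linear_combination P2 c z * hab q + P2 a z * hbc q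
        exact mul_right_cancel₀ hb.ne' hfin
    rcases main with rfl | ⟨_, _, hab⟩
    · intro q; rfl
    · exact hab
  have K2' : ∀ z x x', dmRep p X Y Zb x z = dmRep p X Y Zb x' z →
      ∀ q, PQX q x z * P2 x' z = PQX q x' z * P2 x z := by
    intro z x x' h
    apply K2 z x x'
    have e1 := dmRep_rel p X Y Zb x z
    have e2 := dmRep_rel p X Y Zb x' z
    exact Relation.EqvGen.trans _ _ _ (Relation.EqvGen.symm _ _ e1) (by rw [h]; exact e2)
  -- component sums
  set PCs : 𝒳 → 𝒵' → ℝ :=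
    fun c z => ∑ x', if dmRep p X Y Zb x' z = c then P2 x' z else 0 with hPCs
  set PQCs : 𝒬 → 𝒳 → 𝒵' → ℝ :=
    fun q c z => ∑ x', if dmRep p X Y Zb x' z = c then PQX q x' z else 0 with hPQCs
  have compsum : ∀ q x z,
      PQX q x z * PCs (dmRep p X Y Zb x z) z = P2 x z * PQCs q (dmRep p X Y Zb x z) z := by
    intro q x z
    rw [hPCs, hPQCs]
    rw [Finset.mul_sum, Finset.mul_sum]
    refine Finset.sum_congr rfl fun x' _ => ?_
    by_cases hx' : dmRep p X Y Zb x' z = dmRep p X Y Zb x z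
    · rw [if_pos hx', if_pos hx']
      linear_combination K2' z x x' hx'.symm q
    · rw [if_neg hx', if_neg hx', mul_zero, mul_zero]
  have CORE : ∀ x y q z,
      P4 x y q z * PCs (dmRep p X Y Zb x z) z = P3 x y z * PQCs q (dmRep p X Y Zb x z) z := by
    intro x y q z
    by_cases hx : P2 x z = 0
    · have h4 : P4 x y q z = 0 := le_antisymm (hx ▸ m4 x y q z) (n4 x y q z)
      have h3 : P3 x y z = 0 := le_antisymm (hx ▸ m1 x y z) (n3 x y z)
      rw [h4, h3, zero_mul, zero_mul]
    · have hx' : 0 < P2 x z := lt_of_le_of_ne (n2 x z) (Ne.symm hx)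
      have f1 := F1 x y q z
      have cs := compsum q x z
      have h3 : P2 x z * (P4 x y q z * PCs (dmRep p X Y Zb x z) z)
          = P2 x z * (P3 x y z * PQCs q (dmRep p X Y Zb x z) z) := by
        linear_combination PCs (dmRep p X Y Zb x z) z * f1 + P3 x y z * cs
      exact mul_left_cancel₀ hx h3

  -- unfolded component sums
  have hPCs' : ∀ c z, PCs c z
      = ∑ x', if dmRep p X Y Zb x' z = c then pr p (fun ω => (X ω, Zb ω)) (x', z) else 0 := by
    intro c z
    rw [hPCs, hP2]
  have hPQCs' : ∀ q c z, PQCs q c z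
      = ∑ x', if dmRep p X Y Zb x' z = c then pr p (fun ω => (Q ω, X ω, Zb ω)) (q, x', z) else 0 := by
    intro q c z
    rw [hPQCs, hPQX]
  -- nonemptiness of 𝒳
  have hex0 : ∃ ω, p ω ≠ 0 := by
    by_contra hcon
    push_neg at hcon
    have h1' := hp.2
    rw [Finset.sum_eq_zero (fun ω _ => hcon ω)] at h1'
    exact one_ne_zero h1'.symm
  obtain ⟨ω₀, hω₀⟩ := hex0
  haveI : Nonempty 𝒳 := ⟨X ω₀⟩
  -- goal 1
  have g1 : condH p (fun ω => (dmRep p X Y Zb (X ω) (Zb ω), Zb ω)) (fun ω => (X ω, Zb ω)) = 0 :=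
    condH_det (f := fun t => (dmRep p X Y Zb t.1 t.2, t.2)) (fun ω _ => rfl)
  -- goal 2
  have g2 : condH p (fun ω => (dmRep p X Y Zb (X ω) (Zb ω), Zb ω)) (fun ω => (Y ω, Zb ω)) = 0 := by
    refine condH_det (f := fun t => if h : ∃ x', 0 < P3 x' t.1 t.2
        then (dmRep p X Y Zb h.choose t.2, t.2) else (Classical.arbitrary 𝒳, t.2)) ?_
    intro ω hω
    have hp3 : 0 < P3 (X ω) (Y ω) (Zb ω) := by
      rw [hP3]
      exact lt_of_lt_of_le (lt_of_le_of_ne (hpn ω) (Ne.symm hω))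
        (le_pr_self hpn (fun ω' => (X ω', Y ω', Zb ω')) ω)
    have hex : ∃ x', 0 < P3 x' (Y ω) (Zb ω) := ⟨X ω, hp3⟩
    have key : ∀ x₁ : 𝒳, 0 < P3 x₁ (Y ω) (Zb ω) →
        dmRep p X Y Zb (X ω) (Zb ω) = dmRep p X Y Zb x₁ (Zb ω) := by
      intro x₁ hx₁
      apply dmRep_congr
      refine Relation.EqvGen.rel _ _ ⟨Y ω, ?_, ?_⟩
      · rw [hP3] at hp3; exact hp3
      · rw [hP3] at hx₁; exact hx₁
    simp only [dif_pos hex]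
    rw [key hex.choose hex.choose_spec]
  -- goal 3 : the conditional Markov chain XY - Q'Zb - Q
  have g3 : condMI p (fun ω => (X ω, Y ω)) Q
      (fun ω => ((dmRep p X Y Zb (X ω) (Zb ω), Zb ω), Zb ω)) = 0 := by
    refine condMI_zero_of_indep (fun ω => (X ω, Y ω)) Q
      (fun ω => ((dmRep p X Y Zb (X ω) (Zb ω), Zb ω), Zb ω)) hp ?_
    rintro ⟨x, y⟩ q ⟨⟨c₁, c₂⟩, z⟩
    have E1 : pr p (fun ω => ((X ω, Y ω), (Q ω, ((dmRep p X Y Zb (X ω) (Zb ω), Zb ω), Zb ω))))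
        ((x,y),(q,((c₁,c₂),z)))
        = if c₂ = z ∧ c₁ = dmRep p X Y Zb x z then P4 x y q z else 0 := by
      split
      · next hcond =>
        obtain ⟨hc2, hc1⟩ := hcond
        rw [hP4]
        apply pr_congr
        intro ω
        simp only [Prod.mk.injEq]
        constructor
        · rintro ⟨⟨hX, hY⟩, hQ, ⟨_, _⟩, hZ⟩
          exact ⟨hX, hY, hQ, hZ⟩
        · rintro ⟨hX, hY, hQ, hZ⟩
          subst hX; subst hY; subst hQ; subst hZ
          exact ⟨⟨rfl, rfl⟩, rfl, ⟨hc1.symm, hc2.symm⟩, rfl⟩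
      · next hcond =>
        apply pr_eq_zero_of
        intro ω heq
        simp only [Prod.mk.injEq] at heq
        obtain ⟨⟨hX, hY⟩, hQ, ⟨hr, hZ2⟩, hZ⟩ := heq
        exact hcond ⟨by rw [← hZ2, hZ], by rw [← hr, hX, hZ]⟩
    have E3 : pr p (fun ω => ((X ω, Y ω), ((dmRep p X Y Zb (X ω) (Zb ω), Zb ω), Zb ω)))
        ((x,y),((c₁,c₂),z))
        = if c₂ = z ∧ c₁ = dmRep p X Y Zb x z then P3 x y z else 0 := by
      split
      · next hcond =>
        obtain ⟨hc2, hc1⟩ := hcond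
        rw [hP3]
        apply pr_congr
        intro ω
        simp only [Prod.mk.injEq]
        constructor
        · rintro ⟨⟨hX, hY⟩, ⟨_, _⟩, hZ⟩
          exact ⟨hX, hY, hZ⟩
        · rintro ⟨hX, hY, hZ⟩
          subst hX; subst hY; subst hZ
          exact ⟨⟨rfl, rfl⟩, ⟨hc1.symm, hc2.symm⟩, rfl⟩
      · next hcond =>
        apply pr_eq_zero_of
        intro ω heq
        simp only [Prod.mk.injEq] at heq
        obtain ⟨⟨hX, hY⟩, ⟨hr, hZ2⟩, hZ⟩ := heq
        exact hcond ⟨by rw [← hZ2, hZ], by rw [← hr, hX, hZ]⟩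
    have E2 : pr p (fun ω => ((dmRep p X Y Zb (X ω) (Zb ω), Zb ω), Zb ω)) ((c₁,c₂),z)
        = if c₂ = z then PCs c₁ z else 0 := by
      split
      · next hc2 =>
        subst hc2
        rw [show pr p (fun ω => ((dmRep p X Y Zb (X ω) (Zb ω), Zb ω), Zb ω)) ((c₁,c₂),c₂)
            = ∑ t : 𝒳 × 𝒵', if ((dmRep p X Y Zb t.1 t.2, t.2), t.2) = ((c₁,c₂),c₂)
                then pr p (fun ω => (X ω, Zb ω)) t else 0
          from pr_comp p (fun ω => (X ω, Zb ω))
            (fun t => ((dmRep p X Y Zb t.1 t.2, t.2), t.2)) _]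
        rw [hPCs' c₁ c₂, Fintype.sum_prod_type]
        refine Finset.sum_congr rfl fun x' _ => ?_
        rw [Finset.sum_eq_single c₂]
        · simp only [Prod.mk.injEq, and_true]
        · intro z' _ hz'
          rw [if_neg]
          intro hh
          simp only [Prod.mk.injEq] at hh
          exact hz' hh.2
        · intro hmem
          exact absurd (Finset.mem_univ c₂) hmem
      · next hc2 =>
        apply pr_eq_zero_of
        intro ω heq
        simp only [Prod.mk.injEq] at heq
        obtain ⟨⟨ha', hb'⟩, hcc⟩ := heq
        exact hc2 (by rw [← hb', hcc])
    have E4 : pr p (fun ω => (Q ω, ((dmRep p X Y Zb (X ω) (Zb ω), Zb ω), Zb ω))) (q,((c₁,c₂),z))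
        = if c₂ = z then PQCs q c₁ z else 0 := by
      split
      · next hc2 =>
        subst hc2
        rw [show pr p (fun ω => (Q ω, ((dmRep p X Y Zb (X ω) (Zb ω), Zb ω), Zb ω))) (q,((c₁,c₂),c₂))
            = ∑ t : 𝒬 × 𝒳 × 𝒵', if (t.1, ((dmRep p X Y Zb t.2.1 t.2.2, t.2.2), t.2.2)) = (q,((c₁,c₂),c₂))
                then pr p (fun ω => (Q ω, X ω, Zb ω)) t else 0
          from pr_comp p (fun ω => (Q ω, X ω, Zb ω))
            (fun t => (t.1, ((dmRep p X Y Zb t.2.1 t.2.2, t.2.2), t.2.2))) _]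
        rw [hPQCs' q c₁ c₂, Fintype.sum_prod_type]
        rw [Finset.sum_eq_single q]
        · rw [Fintype.sum_prod_type]
          refine Finset.sum_congr rfl fun x' _ => ?_
          rw [Finset.sum_eq_single c₂]
          · simp only [Prod.mk.injEq, and_true, true_and]
          · intro z' _ hz'
            rw [if_neg]
            intro hh
            simp only [Prod.mk.injEq] at hh
            exact hz' hh.2.2
          · intro hmem
            exact absurd (Finset.mem_univ c₂) hmem
        · intro q' _ hq'
          refine Finset.sum_eq_zero fun t _ => ?_
          rw [if_neg]
          intro hh
          simp only [Prod.mk.injEq] at hh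
          exact hq' hh.1
        · intro hmem
          exact absurd (Finset.mem_univ q) hmem
      · next hc2 =>
        apply pr_eq_zero_of
        intro ω heq
        simp only [Prod.mk.injEq] at heq
        obtain ⟨hq', ⟨ha', hb'⟩, hcc⟩ := heq
        exact hc2 (by rw [← hb', hcc])
    rw [E1, E2, E3, E4]
    by_cases hc2 : c₂ = z
    · by_cases hc1 : c₁ = dmRep p X Y Zb x z
      · rw [if_pos ⟨hc2, hc1⟩, if_pos hc2, if_pos ⟨hc2, hc1⟩, if_pos hc2]
        subst hc1
        exact CORE x y q z
      · rw [if_neg (show ¬(c₂ = z ∧ c₁ = dmRep p X Y Zb x z) from fun hc => hc1 hc.2),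
          if_neg (show ¬(c₂ = z ∧ c₁ = dmRep p X Y Zb x z) from fun hc => hc1 hc.2),
          zero_mul, zero_mul]
    · rw [if_neg (show ¬(c₂ = z ∧ c₁ = dmRep p X Y Zb x z) from fun hc => hc2 hc.1),
        if_neg hc2,
        if_neg (show ¬(c₂ = z ∧ c₁ = dmRep p X Y Zb x z) from fun hc => hc2 hc.1),
        zero_mul, zero_mul]
  -- entropy identities
  have ea : H p (fun ω => ((X ω, Y ω), ((dmRep p X Y Zb (X ω) (Zb ω), Zb ω), Zb ω)))
      = H p (fun ω => ((X ω, Y ω), Zb ω)) :=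
    H_comp_inj p (fun ω => ((X ω, Y ω), Zb ω))
      (φ := fun t => (t.1, ((dmRep p X Y Zb t.1.1 t.2, t.2), t.2)))
      (Function.LeftInverse.injective (g := fun s => (s.1, s.2.2)) (fun t => rfl))
  have eb : H p (fun ω => ((X ω, Y ω), (Q ω, ((dmRep p X Y Zb (X ω) (Zb ω), Zb ω), Zb ω))))
      = H p (fun ω => ((X ω, Y ω), (Q ω, Zb ω))) :=
    H_comp_inj p (fun ω => ((X ω, Y ω), (Q ω, Zb ω)))
      (φ := fun t => (t.1, (t.2.1, ((dmRep p X Y Zb t.1.1 t.2.2, t.2.2), t.2.2))))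
      (Function.LeftInverse.injective (g := fun s => (s.1, (s.2.1, s.2.2.2))) (fun t => rfl))
  have ed : H p (fun ω => (Q ω, ((dmRep p X Y Zb (X ω) (Zb ω), Zb ω), Zb ω)))
      = H p (fun ω => ((dmRep p X Y Zb (X ω) (Zb ω), Zb ω), (Q ω, Zb ω))) :=
    H_comp_inj p (fun ω => ((dmRep p X Y Zb (X ω) (Zb ω), Zb ω), (Q ω, Zb ω)))
      (φ := fun t => (t.2.1, (t.1, t.2.2)))
      (Function.LeftInverse.injective (g := fun s => (s.2.1, (s.1, s.2.2))) (fun t => rfl))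
  have hID : condMI p (fun ω => (X ω, Y ω)) Q Zb
      = condH p (fun ω => (dmRep p X Y Zb (X ω) (Zb ω), Zb ω)) Zb
        - condH p (fun ω => (dmRep p X Y Zb (X ω) (Zb ω), Zb ω)) (fun ω => (Q ω, Zb ω)) := by
    have e3 := g3
    unfold condMI condH at e3 ⊢
    linear_combination e3 - ea + eb - ed
  have hn := condH_nonneg hp (fun ω => (dmRep p X Y Zb (X ω) (Zb ω), Zb ω))
    (fun ω => (Q ω, Zb ω))
  refine ⟨fun ω => (dmRep p X Y Zb (X ω) (Zb ω), Zb ω), g1, g2, g3, by linarith, ?_⟩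
  constructor
  · intro h
    linarith
  · intro h
    rw [hID, h]
    ring
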